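/- For d ∈ [-1,1] and z ∈ [0,1], the map f(x) = x(1+d(1-x-z)) on [0,1] has no periodic points of period two other than its fixed points; equivalently, the quadratic equation obtained from (f(f(x))-x)/(f(x)-x) = 0 has negative discriminant d²(z-1)² - 4 < 0. -/
import Mathlib


open Filter Topology

noncomputable def V (a b c d : ℝ) (p : ℝ × ℝ × ℝ) : ℝ × ℝ × ℝ :=
  (p.1 * (1 - b + d * p.2.1),
   p.2.1 * (1 - a - d * p.1 + c * p.2.2),
   p.2.2 * (1 - c * p.2.1) + a * p.2.1 + b * p.1)

def S2 : Set (ℝ × ℝ × ℝ) :=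
  {p | 0 ≤ p.1 ∧ 0 ≤ p.2.1 ∧ 0 ≤ p.2.2 ∧ p.1 + p.2.1 + p.2.2 = 1}
theorem stmt5 (d z : ℝ) (hd1 : -1 ≤ d) (hd2 : d ≤ 1) (hz0 : 0 ≤ z) (hz1 : z ≤ 1)
    (f : ℝ → ℝ) (hf : ∀ x, f x = x * (1 + d * (1 - x - z))) :
    d ^ 2 * (z - 1) ^ 2 - 4 < 0 ∧
    ∀ x ∈ Set.Icc (0 : ℝ) 1, f (f x) = x → f x = x := by
  constructor
  · have hd : d ^ 2 ≤ 1 := by nlinarith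
    have hz : (z - 1) ^ 2 ≤ 1 := by nlinarith
    nlinarith [mul_le_mul hd hz (sq_nonneg (z - 1)) zero_le_one]
  · rintro x ⟨hx0, hx1⟩ hffx
    have h1 : (1 : ℝ) - d * x ≥ 0 := by nlinarith
    have h2 : (1 : ℝ) + d * (1 - x - z) ≥ 0 := by nlinarith
    have hM : 0 < 1 + (1 - d * x) * (1 + d * (1 - x - z)) := by nlinarith [mul_nonneg h1 h2]
    have key : (f x - x) * (1 + (1 - d * x) * (1 + d * (1 - x - z))) = 0 := by
      have e : (f x - x) * (1 + (1 - d * x) * (1 + d * (1 - x - z))) = f (f x) - x := by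
        rw [hf (f x), hf x]; ring
      rw [e, hffx, sub_self]
    rcases mul_eq_zero.1 key with h | h
    · linarith [sub_eq_zero.1 h]
    · linarith
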